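/- Let X be a real random variable on a finite probability space with E[exp(β·X)] = 1 for some β > 0. Then for every odd natural number N, ∑_{k=1}^{N} (β^k / k!)·E[X^k] ≤ 0. -/

import Mathlib

open Real Finset

private noncomputable def taylorSum (n : ℕ) (x : ℝ) : ℝ :=
  ∑ i ∈ Finset.range n, x ^ i / (Nat.factorial i : ℝ)

private lemma hasDerivAt_taylorSum (n : ℕ) (x : ℝ) :
    HasDerivAt (taylorSum (n + 1)) (taylorSum n x) x := by
  have h : HasDerivAt (taylorSum (n + 1))
      (∑ i ∈ Finset.range (n + 1), (i : ℝ) * x ^ (i - 1) / (Nat.factorial i : ℝ)) x := by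
    unfold taylorSum
    have := HasDerivAt.fun_sum (u := Finset.range (n + 1))
      (A := fun i x => x ^ i / (Nat.factorial i : ℝ))
      (A' := fun i => (i : ℝ) * x ^ (i - 1) / (Nat.factorial i : ℝ))
      (fun i _ => (hasDerivAt_pow i x).div_const _)
    convert this using 1
  convert h using 1
  rw [Finset.sum_range_succ']
  simp only [Nat.cast_zero, zero_mul, Nat.factorial_zero, Nat.cast_one, zero_div, add_zero]
  unfold taylorSum
  refine Finset.sum_congr rfl fun i _ => ?_
  have : (Nat.factorial (i + 1) : ℝ) = (i + 1) * Nat.factorial i := by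
    rw [Nat.factorial_succ]; push_cast; ring
  rw [this]
  simp only [Nat.add_sub_cancel, Nat.cast_add, Nat.cast_one]
  have h1 : ((i : ℝ) + 1) ≠ 0 := by positivity
  field_simp

private lemma taylorSum_zero_eval (n : ℕ) : taylorSum (n + 1) 0 = 1 := by
  unfold taylorSum
  rw [Finset.sum_range_succ']
  simp [Nat.factorial]

private lemma taylorSum_le_exp (m : ℕ) : ∀ x : ℝ, taylorSum (2 * m + 2) x ≤ Real.exp x := by
  induction m with
  | zero =>
    intro x
    have : taylorSum 2 x = 1 + x := by
      unfold taylorSum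
      simp [Finset.sum_range_succ, Nat.factorial]
    rw [this]
    linarith [Real.add_one_le_exp x]
  | succ m ih =>
    intro x
    rcases le_or_gt 0 x with hx | hx
    · exact Real.sum_le_exp_of_nonneg hx _
    · -- x < 0 case
      set n := 2 * m + 2 with hn
      -- g1 = exp - taylorSum (n+1), derivative exp - taylorSum n ≥ 0, so g1 monotone
      have hg1mono : Monotone (fun t => Real.exp t - taylorSum (n + 1) t) := by
        apply monotone_of_deriv_nonneg
        · exact fun t => (Real.differentiable_exp t).sub
            (hasDerivAt_taylorSum n t).differentiableAt
        · intro t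
          have := ((Real.hasDerivAt_exp t).fun_sub (hasDerivAt_taylorSum n t)).deriv
          rw [this]
          linarith [ih t]
      have hg1_zero : Real.exp 0 - taylorSum (n + 1) 0 = 0 := by
        rw [Real.exp_zero, taylorSum_zero_eval]; ring
      -- g2 = exp - taylorSum (n+2) is antitone on Iic 0
      have hg2anti : AntitoneOn (fun t => Real.exp t - taylorSum (n + 2) t) (Set.Iic 0) := by
        apply antitoneOn_of_deriv_nonpos (convex_Iic 0)
        · refine Continuous.continuousOn (Real.continuous_exp.sub ?_)
          exact continuous_finset_sum _ fun i _ => (continuous_pow i).div_const _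
        · intro t _
          exact ((Real.differentiable_exp t).sub
            (hasDerivAt_taylorSum (n + 1) t).differentiableAt).differentiableWithinAt
        · intro t ht
          rw [interior_Iic] at ht
          have hd := ((Real.hasDerivAt_exp t).fun_sub (hasDerivAt_taylorSum (n + 1) t)).deriv
          rw [hd]
          have h2 : Real.exp t - taylorSum (n + 1) t
              ≤ Real.exp 0 - taylorSum (n + 1) 0 := hg1mono ht.le
          linarith
      have := hg2anti (Set.mem_Iic.mpr hx.le) (Set.mem_Iic.mpr le_rfl) hx.le
      have h0 : Real.exp 0 - taylorSum (n + 2) 0 = 0 := by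
        rw [Real.exp_zero, taylorSum_zero_eval]; ring
      have h1 : Real.exp 0 - taylorSum (n + 2) 0
          ≤ Real.exp x - taylorSum (n + 2) x := this
      have h2 : 0 ≤ Real.exp x - taylorSum (n + 2) x := by linarith
      have heq : 2 * (m + 1) + 2 = n + 2 := by omega
      rw [heq]
      linarith

private lemma sum_range_le_exp_of_odd {N : ℕ} (hN : Odd N) (x : ℝ) :
    ∑ i ∈ Finset.range (N + 1), x ^ i / (Nat.factorial i : ℝ) ≤ Real.exp x := by
  obtain ⟨m, hm⟩ := hN
  have : N + 1 = 2 * m + 2 := by omega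
  rw [this]
  exact taylorSum_le_exp m x

/-- Hierarchy of second-law inequalities: if `E[exp (β X)] = 1` with `β > 0`,
then for every odd `N`, `∑_{k=1}^N (β^k / k!) E[X^k] ≤ 0`. -/
theorem second_law_hierarchy
    {Ω : Type*} [Fintype Ω]
    (p : Ω → ℝ) (hpnn : ∀ ω, 0 ≤ p ω) (hpnorm : ∑ ω, p ω = 1)
    (X : Ω → ℝ) (β : ℝ) (hβ : 0 < β)
    (h : ∑ ω, p ω * Real.exp (β * X ω) = 1)
    (N : ℕ) (hN : Odd N) :
    ∑ k ∈ Finset.Icc 1 N,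
      (β ^ k / (Nat.factorial k : ℝ)) * ∑ ω, p ω * (X ω) ^ k ≤ 0 := by
  have hins : Finset.range (N + 1) = insert 0 (Finset.Icc 1 N) := by
    ext k; simp [Finset.mem_range, Finset.mem_Icc]; omega
  have key : ∑ k ∈ Finset.Icc 1 N,
      (β ^ k / (Nat.factorial k : ℝ)) * ∑ ω, p ω * (X ω) ^ k
      = ∑ ω, p ω * (∑ k ∈ Finset.range (N + 1),
          (β * X ω) ^ k / (Nat.factorial k : ℝ) - 1) := by
    calc ∑ k ∈ Finset.Icc 1 N,
        (β ^ k / (Nat.factorial k : ℝ)) * ∑ ω, p ω * (X ω) ^ k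
        = ∑ k ∈ Finset.Icc 1 N, ∑ ω,
            p ω * ((β * X ω) ^ k / (Nat.factorial k : ℝ)) := by
          refine Finset.sum_congr rfl fun k _ => ?_
          rw [Finset.mul_sum]
          refine Finset.sum_congr rfl fun ω _ => ?_
          rw [mul_pow]; ring
      _ = ∑ ω, ∑ k ∈ Finset.Icc 1 N,
            p ω * ((β * X ω) ^ k / (Nat.factorial k : ℝ)) := Finset.sum_comm
      _ = ∑ ω, p ω * (∑ k ∈ Finset.range (N + 1),
            (β * X ω) ^ k / (Nat.factorial k : ℝ) - 1) := by
          refine Finset.sum_congr rfl fun ω _ => ?_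
          rw [← Finset.mul_sum, hins, Finset.sum_insert (by simp)]
          simp only [pow_zero, Nat.factorial_zero, Nat.cast_one]
          ring
  rw [key]
  have hle : ∑ ω, p ω * (∑ k ∈ Finset.range (N + 1),
      (β * X ω) ^ k / (Nat.factorial k : ℝ) - 1)
      ≤ ∑ ω, p ω * (Real.exp (β * X ω) - 1) := by
    refine Finset.sum_le_sum fun ω _ => ?_
    refine mul_le_mul_of_nonneg_left ?_ (hpnn ω)
    have := sum_range_le_exp_of_odd hN (β * X ω)
    linarith
  have hrhs : ∑ ω, p ω * (Real.exp (β * X ω) - 1) = 0 := by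
    have : ∑ ω, p ω * (Real.exp (β * X ω) - 1)
        = (∑ ω, p ω * Real.exp (β * X ω)) - ∑ ω, p ω := by
      rw [← Finset.sum_sub_distrib]
      refine Finset.sum_congr rfl fun ω _ => by ring
    rw [this, h, hpnorm]; ring
  linarith
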